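/- Let W be the Weyl group of type A_n with simple reflections s_1,...,s_n, and let J = {s} = {s_1} be the singleton consisting of the first simple reflection. Define Y_J = {w ∈ W : w has minimal length in wW_J and R(w w_J) = J}, where R(x) = {t ∈ S : ℓ(xt) < ℓ(x)} and w_J = s_1. Then Y_J = {e, s_2, s_3 s_2, ..., s_n s_{n-1} ⋯ s_2}. -/

import Mathlib

open CoxeterSystem

namespace YJAux

/-! ### Generic permutation lemmas -/

lemma swap_comm_disj {α : Type*} [DecidableEq α] {a b c d : α} (hac : a ≠ c) (had : a ≠ d)
    (hbc : b ≠ c) (hbd : b ≠ d) :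
    Equiv.swap a b * Equiv.swap c d = Equiv.swap c d * Equiv.swap a b := by
  ext x
  simp only [Equiv.Perm.mul_apply, Equiv.swap_apply_def]
  split_ifs <;> simp_all

lemma swap_cube {α : Type*} [DecidableEq α] [Fintype α] {a b c : α} (hab : a ≠ b) (hbc : b ≠ c)
    (hac : a ≠ c) : (Equiv.swap a b * Equiv.swap b c) ^ 3 = 1 := by
  rw [Equiv.swap_comm a b]
  have h := Equiv.Perm.isThreeCycle_swap_mul_swap_same (show b ≠ a from hab.symm) hbc hac
  rw [← h.orderOf]
  exact pow_orderOf_eq_one _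

lemma swap_cube' {α : Type*} [DecidableEq α] [Fintype α] {a b c : α} (hab : a ≠ b)
    (hbc : b ≠ c) (hac : a ≠ c) : (Equiv.swap b c * Equiv.swap a b) ^ 3 = 1 := by
  have h := swap_cube hab hbc hac
  have e : Equiv.swap b c * Equiv.swap a b = (Equiv.swap a b * Equiv.swap b c)⁻¹ := by
    rw [mul_inv_rev, Equiv.swap_inv, Equiv.swap_inv]
  rw [e, inv_pow, h, inv_one]

lemma swap_sq_disj {α : Type*} [DecidableEq α] {a b c d : α} (hac : a ≠ c) (had : a ≠ d)
    (hbc : b ≠ c) (hbd : b ≠ d) : (Equiv.swap a b * Equiv.swap c d) ^ 2 = 1 := by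
  rw [pow_two, mul_assoc, ← mul_assoc (Equiv.swap c d) (Equiv.swap a b) (Equiv.swap c d),
    ← swap_comm_disj hac had hbc hbd,
    mul_assoc (Equiv.swap a b) (Equiv.swap c d) (Equiv.swap c d), Equiv.swap_mul_self,
    mul_one, Equiv.swap_mul_self]

variable {n : ℕ} {W : Type*} [Group W] (cs : CoxeterSystem (CoxeterMatrix.Aₙ n) W)

lemma An_apply (i j : Fin n) : CoxeterMatrix.Aₙ n i j =
    if i = j then 1 else if (j : ℕ) + 1 = i ∨ (i : ℕ) + 1 = j then 3 else 2 := rfl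

/-! ### Commutation and braid relations -/

lemma simple_comm {i j : Fin n} (h : (i : ℕ) + 2 ≤ j ∨ (j : ℕ) + 2 ≤ i) :
    cs.simple i * cs.simple j = cs.simple j * cs.simple i := by
  have hM : CoxeterMatrix.Aₙ n i j = 2 := by
    rw [An_apply, if_neg (by rintro rfl; omega), if_neg (by omega)]
  have hp := cs.simple_mul_simple_pow i j
  rw [hM, pow_two] at hp
  have h2 : cs.simple i * cs.simple j = (cs.simple i * cs.simple j)⁻¹ :=
    eq_inv_of_mul_eq_one_left hp
  rw [h2, mul_inv_rev, cs.inv_simple, cs.inv_simple]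

lemma simple_braid {i j : Fin n} (h : (i : ℕ) + 1 = j ∨ (j : ℕ) + 1 = i) :
    cs.simple i * cs.simple j * cs.simple i = cs.simple j * cs.simple i * cs.simple j := by
  have hM : CoxeterMatrix.Aₙ n i j = 3 := by
    rw [An_apply, if_neg (by rintro rfl; omega), if_pos (by omega)]
  have hp := cs.simple_mul_simple_pow i j
  rw [hM] at hp
  have h1 : (cs.simple i * cs.simple j * cs.simple i) * (cs.simple j * cs.simple i * cs.simple j)
      = 1 := by
    rw [show (3 : ℕ) = 2 + 1 from rfl, pow_succ, pow_two] at hp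
    calc (cs.simple i * cs.simple j * cs.simple i) * (cs.simple j * cs.simple i * cs.simple j)
        = cs.simple i * cs.simple j * (cs.simple i * cs.simple j) * (cs.simple i * cs.simple j)
          := by group
      _ = 1 := hp
  have h2 := eq_inv_of_mul_eq_one_left h1
  rw [h2, mul_inv_rev, mul_inv_rev, cs.inv_simple, cs.inv_simple, ← mul_assoc]

/-! ### The elements `X k = s (k-1) * ⋯ * s 1 * s 0` -/

/-- The `m`-th simple reflection, extended by `1` out of range. -/
def sn (m : ℕ) : W := if h : m < n then cs.simple ⟨m, h⟩ else 1

lemma sn_of_lt {m : ℕ} (h : m < n) : sn cs m = cs.simple ⟨m, h⟩ := dif_pos h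

lemma sn_of_ge {m : ℕ} (h : ¬ m < n) : sn cs m = 1 := dif_neg h

lemma sn_coe (j : Fin n) : sn cs (j : ℕ) = cs.simple j := by
  rw [sn_of_lt cs j.2, Fin.eta]

lemma sn_mul_self (m : ℕ) : sn cs m * sn cs m = 1 := by
  by_cases h : m < n
  · rw [sn_of_lt cs h, cs.simple_mul_simple_self]
  · rw [sn_of_ge cs h, one_mul]

lemma sn_comm {a b : ℕ} (h : a + 2 ≤ b) : sn cs a * sn cs b = sn cs b * sn cs a := by
  by_cases hb : b < n
  · have ha : a < n := by omega
    rw [sn_of_lt cs ha, sn_of_lt cs hb]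
    exact simple_comm cs (by simp; omega)
  · rw [sn_of_ge cs hb, one_mul, mul_one]

lemma sn_braid {a : ℕ} (h : a + 1 < n) :
    sn cs a * sn cs (a + 1) * sn cs a = sn cs (a + 1) * sn cs a * sn cs (a + 1) := by
  rw [sn_of_lt cs h, sn_of_lt cs (by omega : a < n)]
  exact simple_braid cs (by simp)

/-- `X k = s (k-1) * s (k-2) * ⋯ * s 0`. -/
def X : ℕ → W
  | 0 => 1
  | k + 1 => sn cs k * X k

lemma X_succ (k : ℕ) : X cs (k + 1) = sn cs k * X cs k := rfl

lemma sn_mul_X_comm {j k : ℕ} (h : k + 1 ≤ j) : sn cs j * X cs k = X cs k * sn cs j := by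
  induction k with
  | zero => rw [X]; rw [one_mul, mul_one]
  | succ k ih =>
      rw [X_succ, ← mul_assoc, ← sn_comm cs (by omega : k + 2 ≤ j), mul_assoc,
        ih (by omega), ← mul_assoc]

lemma braid_X : ∀ k, ∀ j : ℕ, j + 1 < k → k ≤ n →
    sn cs j * X cs k = X cs k * sn cs (j + 1) := by
  intro k
  induction k with
  | zero => intro j hj _; omega
  | succ k ih =>
      intro j hj hkn
      by_cases hcase : j + 1 = k
      · subst hcase
        calc sn cs j * X cs (j + 1 + 1)
            = sn cs j * sn cs (j + 1) * sn cs j * X cs j := by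
              rw [X_succ, X_succ]; simp only [mul_assoc]
          _ = sn cs (j + 1) * sn cs j * sn cs (j + 1) * X cs j := by
              rw [sn_braid cs (by omega)]
          _ = sn cs (j + 1) * sn cs j * (sn cs (j + 1) * X cs j) := by
              simp only [mul_assoc]
          _ = sn cs (j + 1) * sn cs j * (X cs j * sn cs (j + 1)) := by
              rw [sn_mul_X_comm cs (show j + 1 ≤ j + 1 from le_refl _)]
          _ = X cs (j + 1 + 1) * sn cs (j + 1) := by
              rw [X_succ, X_succ]; simp only [mul_assoc]
      · have hjk : j + 1 < k := by omega
        rw [X_succ, ← mul_assoc, sn_comm cs (by omega : j + 2 ≤ k), mul_assoc,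
          ih j hjk (by omega), ← mul_assoc]

/-! ### The permutation representation -/

/-- The standard permutation representation of the generators. -/
def fperm (n : ℕ) (i : Fin n) : Equiv.Perm (Fin (n + 1)) :=
  Equiv.swap ⟨(i : ℕ), by omega⟩ ⟨(i : ℕ) + 1, by omega⟩

lemma fperm_liftable : CoxeterMatrix.IsLiftable (CoxeterMatrix.Aₙ n) (fperm n) := by
  intro i j
  rw [An_apply]
  by_cases hij : i = j
  · subst hij
    rw [if_pos rfl, pow_one, fperm, Equiv.swap_mul_self]
  · rw [if_neg hij]
    have hne : (i : ℕ) ≠ (j : ℕ) := fun h => hij (Fin.ext h)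
    have hin : (i : ℕ) < n := i.2
    have hjn : (j : ℕ) < n := j.2
    by_cases hadj : (j : ℕ) + 1 = i ∨ (i : ℕ) + 1 = j
    · rw [if_pos hadj]
      rcases hadj with h | h
      · -- j + 1 = i
        have e1 : fperm n i = Equiv.swap ⟨(j : ℕ) + 1, by omega⟩ ⟨(j : ℕ) + 2, by omega⟩ := by
          rw [fperm]; congr 1 <;> exact Fin.ext (by simp; omega)
        rw [e1, fperm]
        exact swap_cube' (a := (⟨(j : ℕ), by omega⟩ : Fin (n + 1)))
          (by simp only [ne_eq, Fin.mk.injEq]; omega)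
          (by simp only [ne_eq, Fin.mk.injEq]; omega)
          (by simp only [ne_eq, Fin.mk.injEq]; omega)
      · -- i + 1 = j
        have e1 : fperm n j = Equiv.swap ⟨(i : ℕ) + 1, by omega⟩ ⟨(i : ℕ) + 2, by omega⟩ := by
          rw [fperm]; congr 1 <;> exact Fin.ext (by simp; omega)
        rw [e1, fperm]
        exact swap_cube
          (by simp only [ne_eq, Fin.mk.injEq]; omega)
          (by simp only [ne_eq, Fin.mk.injEq]; omega)
          (by simp only [ne_eq, Fin.mk.injEq]; omega)
    · rw [if_neg hadj]
      push_neg at hadj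
      rw [fperm, fperm]
      exact swap_sq_disj
        (by simp only [ne_eq, Fin.mk.injEq]; omega)
        (by simp only [ne_eq, Fin.mk.injEq]; omega)
        (by simp only [ne_eq, Fin.mk.injEq]; omega)
        (by simp only [ne_eq, Fin.mk.injEq]; omega)

/-- The representation `W →* Perm (Fin (n+1))`. -/
noncomputable def piP : W →* Equiv.Perm (Fin (n + 1)) := cs.lift ⟨fperm n, fperm_liftable⟩

lemma piP_simple (i : Fin n) : piP cs (cs.simple i) = fperm n i :=
  cs.lift_apply_simple fperm_liftable i

lemma fperm_apply_le (i : Fin n) (a : Fin (n + 1)) : ((fperm n i) a : ℕ) ≤ (a : ℕ) + 1 := by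
  rw [fperm, Equiv.swap_apply_def]
  split_ifs with h1 h2
  · simp [h1]
  · simp [h2]; omega
  · omega

lemma piP_apply_le (w : W) (a : Fin (n + 1)) : ((piP cs w) a : ℕ) ≤ (a : ℕ) + cs.length w := by
  generalize hl : cs.length w = l
  induction l generalizing w a with
  | zero =>
      have : w = 1 := cs.length_eq_zero_iff.mp hl
      simp [this]
  | succ l ih =>
      have hw : w ≠ 1 := by
        intro h; rw [h, cs.length_one] at hl; omega
      obtain ⟨j, hj⟩ := cs.exists_leftDescent_of_ne_one hw
      have hlen := cs.isLeftDescent_iff.mp hj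
      have hww : w = cs.simple j * (cs.simple j * w) := by
        rw [cs.simple_mul_simple_cancel_left]
      have hl' : cs.length (cs.simple j * w) = l := by omega
      calc ((piP cs w) a : ℕ)
          = ((piP cs (cs.simple j * (cs.simple j * w))) a : ℕ) := by rw [← hww]
        _ = ((fperm n j) ((piP cs (cs.simple j * w)) a) : ℕ) := by
            rw [map_mul, piP_simple, Equiv.Perm.mul_apply]
        _ ≤ ((piP cs (cs.simple j * w)) a : ℕ) + 1 := fperm_apply_le j _
        _ ≤ (a : ℕ) + l + 1 := by have := ih (cs.simple j * w) a hl'; omega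

lemma piP_X_apply_zero : ∀ k, k ≤ n → ((piP cs (X cs k)) ⟨0, Nat.succ_pos n⟩ : ℕ) = k := by
  intro k
  induction k with
  | zero => intro _; rw [X]; simp
  | succ k ih =>
      intro hk
      have hkn : k < n := by omega
      rw [X_succ, sn_of_lt cs hkn, map_mul, piP_simple, Equiv.Perm.mul_apply]
      have h0 : (piP cs (X cs k)) ⟨0, Nat.succ_pos n⟩ = ⟨k, by omega⟩ :=
        Fin.ext (ih (by omega))
      rw [h0, fperm]
      rw [show (⟨k, by omega⟩ : Fin (n + 1)) = ⟨((⟨k, hkn⟩ : Fin n) : ℕ), by omega⟩ from rfl,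
        Equiv.swap_apply_left]

/-! ### Lengths -/

lemma length_X_le (k : ℕ) : cs.length (X cs k) ≤ k := by
  induction k with
  | zero => rw [X, cs.length_one]
  | succ k ih =>
      rw [X_succ]
      have h1 : cs.length (sn cs k) ≤ 1 := by
        by_cases h : k < n
        · rw [sn_of_lt cs h, cs.length_simple]
        · rw [sn_of_ge cs h, cs.length_one]; omega
      have := cs.length_mul_le (sn cs k) (X cs k)
      omega

lemma length_X {k : ℕ} (hk : k ≤ n) : cs.length (X cs k) = k := by
  refine le_antisymm (length_X_le cs k) ?_
  have h1 := piP_apply_le cs (X cs k) ⟨0, Nat.succ_pos n⟩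
  have h2 := piP_X_apply_zero cs k hk
  have hb : ((⟨0, Nat.succ_pos n⟩ : Fin (n + 1)) : ℕ) = 0 := rfl
  omega

lemma not_isRightDescent_X {k : ℕ} (hn : 0 < n) (hk : k + 1 ≤ n) (i : Fin n)
    (hi : i ≠ ⟨0, hn⟩) : ¬ cs.IsRightDescent (X cs (k + 1)) i := by
  intro hd
  rw [IsRightDescent, length_X cs hk] at hd
  -- lower bound on the length of `X (k+1) * s i`
  have hfix : (fperm n i) ⟨0, Nat.succ_pos n⟩ = ⟨0, Nat.succ_pos n⟩ := by
    rw [fperm]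
    refine Equiv.swap_apply_of_ne_of_ne ?_ ?_ <;>
      · simp only [ne_eq, Fin.ext_iff]
        simp only [ne_eq, Fin.ext_iff] at hi
        omega
  have h1 : ((piP cs (X cs (k + 1) * cs.simple i)) ⟨0, Nat.succ_pos n⟩ : ℕ) = k + 1 := by
    rw [map_mul, piP_simple, Equiv.Perm.mul_apply, hfix, piP_X_apply_zero cs (k + 1) hk]
  have h2 := piP_apply_le cs (X cs (k + 1) * cs.simple i) ⟨0, Nat.succ_pos n⟩
  have hb : ((⟨0, Nat.succ_pos n⟩ : Fin (n + 1)) : ℕ) = 0 := rfl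
  omega

/-! ### Relation to the words in the statement -/

lemma X_eq_word (hn : 0 < n) : ∀ k : ℕ, (hk : k ≤ n - 1) →
    X cs (k + 1) =
      cs.wordProd (List.ofFn fun j : Fin k => (⟨k - (j : ℕ), by have := hn; omega⟩ : Fin n)) *
        cs.simple ⟨0, hn⟩ := by
  intro k
  induction k with
  | zero =>
      intro _
      rw [X_succ, X, mul_one, List.ofFn_zero, cs.wordProd_nil, one_mul, sn_of_lt cs hn]
  | succ k ih =>
      intro hk
      have hlist : (List.ofFn fun j : Fin (k + 1) => (⟨k + 1 - (j : ℕ), by omega⟩ : Fin n)) =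
          (⟨k + 1, by omega⟩ : Fin n) ::
            (List.ofFn fun j : Fin k => (⟨k - (j : ℕ), by omega⟩ : Fin n)) := by
        rw [List.ofFn_succ]
        refine congrArg₂ List.cons (Fin.ext ?_) ?_
        · simp only [Fin.val_zero]; omega
        · refine congrArg List.ofFn (funext fun j => Fin.ext ?_)
          simp only [Fin.val_succ]; omega
      rw [hlist, cs.wordProd_cons, X_succ, ih (by omega), sn_of_lt cs (by omega : k + 1 < n),
        ← mul_assoc]

/-! ### Classification of elements with unique right descent at 0 -/

lemma classify (hn : 0 < n) (l : ℕ) : ∀ x : W, cs.length x = l → x ≠ 1 →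
    (∀ i : Fin n, cs.IsRightDescent x i ↔ i = ⟨0, hn⟩) →
    ∃ k, k ≤ n - 1 ∧ x = X cs (k + 1) := by
  induction l using Nat.strong_induction_on with
  | _ l IH =>
  intro x hl hx hdesc
  obtain ⟨j, hj⟩ := cs.exists_leftDescent_of_ne_one hx
  have hlen : cs.length (cs.simple j * x) + 1 = cs.length x := cs.isLeftDescent_iff.mp hj
  set x' := cs.simple j * x with hx'def
  have hxx : x = cs.simple j * x' := by
    rw [hx'def, cs.simple_mul_simple_cancel_left]
  by_cases hx1 : x' = 1
  · -- x = s j, and the unique descent forces j = 0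
    have hxj : x = cs.simple j := by rw [hxx, hx1, mul_one]
    have hdj : cs.IsRightDescent x j := by
      rw [IsRightDescent, hxj, cs.simple_mul_simple_self, cs.length_one, cs.length_simple]
      omega
    have hj0 : j = ⟨0, hn⟩ := (hdesc j).mp hdj
    refine ⟨0, by omega, ?_⟩
    rw [X_succ, X, mul_one, sn_of_lt cs hn, hxj, hj0]
  · -- x' also has unique right descent at 0
    have hd' : ∀ i : Fin n, cs.IsRightDescent x' i ↔ i = ⟨0, hn⟩ := by
      have fwd : ∀ i : Fin n, cs.IsRightDescent x' i → i = ⟨0, hn⟩ := by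
        intro i hdi
        by_contra hne
        have h1 : cs.length (x * cs.simple i) = cs.length x + 1 :=
          cs.not_isRightDescent_iff.mp (fun h => hne ((hdesc i).mp h))
        have h2 : cs.length (x * cs.simple i) ≤ 1 + cs.length (x' * cs.simple i) := by
          have : x * cs.simple i = cs.simple j * (x' * cs.simple i) := by
            rw [← mul_assoc, ← hxx]
          rw [this]
          have := cs.length_mul_le (cs.simple j) (x' * cs.simple i)
          rw [cs.length_simple] at this
          exact this
        have h3 : cs.length (x' * cs.simple i) < cs.length x' := hdi
        omega
      intro i
      refine ⟨fwd i, ?_⟩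
      rintro rfl
      obtain ⟨i₀, hi₀⟩ := cs.exists_rightDescent_of_ne_one hx1
      have := fwd i₀ hi₀
      rwa [this] at hi₀
    obtain ⟨k', hk', hxk⟩ := IH (cs.length x') (by omega) x' rfl hx1 hd'
    have hsj : cs.simple j = sn cs (j : ℕ) := (sn_coe cs j).symm
    have hjn : (j : ℕ) < n := j.2
    -- four cases on j versus k'
    rcases Nat.lt_or_ge (j : ℕ) k' with hcase | hcase
    · -- j < k' : contradiction via braid relation
      exfalso
      have hb := braid_X cs (k' + 1) (j : ℕ) (by omega) (by omega)
      have hxs : x * sn cs ((j : ℕ) + 1) = x' := by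
        rw [hxx, hxk, hsj, mul_assoc, ← hb, ← mul_assoc, sn_mul_self, one_mul]
      have hj1n : (j : ℕ) + 1 < n := by omega
      have hdx : cs.IsRightDescent x ⟨(j : ℕ) + 1, hj1n⟩ := by
        rw [IsRightDescent]
        have : cs.simple ⟨(j : ℕ) + 1, hj1n⟩ = sn cs ((j : ℕ) + 1) := by
          rw [sn_of_lt cs hj1n]
        rw [this, hxs]
        omega
      have := (hdesc _).mp hdx
      simp only [Fin.mk.injEq] at this
      omega
    · -- j ≥ k'
      rcases Nat.eq_or_lt_of_le hcase with heq | hlt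
      · -- j = k' : x = X k'
        have hxX : x = X cs k' := by
          rw [hxx, hxk, hsj, ← heq, X_succ, ← mul_assoc, sn_mul_self, one_mul]
        rcases Nat.eq_zero_or_pos k' with h0 | h0
        · exfalso
          rw [h0, X] at hxX
          exact hx hxX
        · refine ⟨k' - 1, by omega, ?_⟩
          rw [hxX, show k' - 1 + 1 = k' from by omega]
      · rcases Nat.eq_or_lt_of_le hlt with heq2 | hlt2
        · -- j = k' + 1 : x = X (k' + 2)
          refine ⟨k' + 1, by omega, ?_⟩
          rw [hxx, hxk, hsj, ← heq2, ← X_succ]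
        · -- j ≥ k' + 2 : contradiction via commutation
          exfalso
          have hb := sn_mul_X_comm cs (show (k' + 1) + 1 ≤ (j : ℕ) by omega)
          have hxs : x * cs.simple j = x' := by
            rw [hxx, hxk, hsj, hb, mul_assoc, ← hsj, cs.simple_mul_simple_self, mul_one]
          have hdx : cs.IsRightDescent x j := by
            rw [IsRightDescent, hxs]
            omega
          have := (hdesc _).mp hdx
          rw [this] at hlt2
          simp at hlt2

end YJAux

/-- Let `W` be the Weyl group of type `Aₙ` with simple reflections
`s₁, …, sₙ` (here `0`-indexed: `sᵢ = cs.simple ⟨i-1, _⟩`), and let `J = {s₁}`.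
Define `Y_J = {w ∈ W : w minimal in w W_J and R(w w_J) = J}`, where `R` is the right
descent set and `w_J = s₁`.  Then `Y_J = {e, s₂, s₃ s₂, …, sₙ sₙ₋₁ ⋯ s₂}`. -/
theorem YJ_for_first_simple (n : ℕ) (hn : 0 < n) {W : Type*} [Group W]
    (cs : CoxeterSystem (CoxeterMatrix.Aₙ n) W) :
    {w : W | ¬ cs.IsRightDescent w ⟨0, hn⟩ ∧
      (∀ i : Fin n, cs.IsRightDescent (w * cs.simple ⟨0, hn⟩) i ↔ i = ⟨0, hn⟩)} =
    {w : W | ∃ k : ℕ, ∃ hk : k ≤ n - 1,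
      w = cs.wordProd (List.ofFn fun j : Fin k => (⟨k - (j : ℕ), by omega⟩ : Fin n))} := by
  ext w
  simp only [Set.mem_setOf_eq]
  constructor
  · rintro ⟨hnd, hdesc⟩
    have hlw := cs.not_isRightDescent_iff.mp hnd
    have hx1 : w * cs.simple ⟨0, hn⟩ ≠ 1 := by
      intro h
      rw [h, cs.length_one] at hlw
      omega
    obtain ⟨k, hk, hxk⟩ := YJAux.classify cs hn (cs.length (w * cs.simple ⟨0, hn⟩))
      (w * cs.simple ⟨0, hn⟩) rfl hx1 hdesc
    refine ⟨k, hk, ?_⟩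
    have hXw := YJAux.X_eq_word cs hn k hk
    calc w = (w * cs.simple ⟨0, hn⟩) * cs.simple ⟨0, hn⟩ := by
              rw [cs.simple_mul_simple_cancel_right]
      _ = YJAux.X cs (k + 1) * cs.simple ⟨0, hn⟩ := by rw [hxk]
      _ = cs.wordProd (List.ofFn fun j : Fin k => (⟨k - (j : ℕ), by omega⟩ : Fin n)) := by
              rw [hXw, cs.simple_mul_simple_cancel_right]
  · rintro ⟨k, hk, rfl⟩
    set ω : List (Fin n) := List.ofFn fun j : Fin k => (⟨k - (j : ℕ), by omega⟩ : Fin n) with hω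
    have hw0 : cs.wordProd ω * cs.simple ⟨0, hn⟩ = YJAux.X cs (k + 1) := by
      rw [YJAux.X_eq_word cs hn k hk]
    have hlw : cs.length (cs.wordProd ω) ≤ k := by
      have := cs.length_wordProd_le ω
      rwa [hω, List.length_ofFn] at this
    have hlX : cs.length (YJAux.X cs (k + 1)) = k + 1 := YJAux.length_X cs (by omega)
    constructor
    · intro hd
      rw [CoxeterSystem.IsRightDescent, hw0, hlX] at hd
      omega
    · intro i
      constructor
      · intro hdi
        by_contra hne
        rw [hw0] at hdi
        exact YJAux.not_isRightDescent_X cs hn (by omega) i hne hdi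
      · rintro rfl
        rw [CoxeterSystem.IsRightDescent, cs.simple_mul_simple_cancel_right, hw0, hlX]
        omega
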